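/- Let J be a convex subset of [0,1]^s and let k ∈ ℕ. Partition [0,1)^s into the b^{sk} cubes W = ∏_{j=1}^s [c_j/b^k, (c_j+1)/b^k) with 0 ≤ c_j < b^k. Let W̄_k be the union of those cubes having nonempty intersection with the closure of J, and let W_k^o be the union of those cubes fully contained in J. Then λ(W̄_k \ J) ≤ 2s·√s·b^{-k} and λ(J \ W_k^o) ≤ 2s·√s·b^{-k}. -/

import Mathlib

open MeasureTheory Set
open scoped ENNReal

/-- The `b`-adic cube of side length `b^{-k}` indexed by `c`. -/
def bCube (b k : ℕ) {s : ℕ} (c : Fin s → ℕ) : Set (Fin s → ℝ) :=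
  Set.univ.pi fun j => Set.Ico ((c j : ℝ) / (b : ℝ) ^ k) (((c j : ℝ) + 1) / (b : ℝ) ^ k)

/-- The unit cube `[0,1]^s`. -/
def unitCube (s : ℕ) : Set (Fin s → ℝ) := Set.univ.pi fun _ => Set.Icc (0 : ℝ) 1

namespace CubeApprox

variable {s : ℕ}

def dirVec (i : Fin s) : Fin s → ℝ := Pi.single i (1 : ℝ)

@[simp] lemma dirVec_same (i : Fin s) : dirVec i i = 1 := Pi.single_eq_same i 1

lemma dirVec_ne {i j : Fin s} (h : j ≠ i) : dirVec i j = 0 := Pi.single_eq_of_ne h 1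

/-- Expand a set by a segment of radius `δ` in direction `i`. -/
def expandDir (i : Fin s) (δ : ℝ) (K : Set (Fin s → ℝ)) : Set (Fin s → ℝ) :=
  {x | ∃ c : ℝ, |c| ≤ δ ∧ x + c • dirVec i ∈ K}

/-- Shrink a set by a segment of radius `δ` in direction `i`. -/
def shrinkDir (i : Fin s) (δ : ℝ) (K : Set (Fin s → ℝ)) : Set (Fin s → ℝ) :=
  {x | ∀ c : ℝ, |c| ≤ δ → x + c • dirVec i ∈ K}

lemma subset_expandDir {i : Fin s} {δ : ℝ} (hδ : 0 ≤ δ) (K : Set (Fin s → ℝ)) :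
    K ⊆ expandDir i δ K := fun x hx => ⟨0, by simpa using hδ, by simpa using hx⟩

lemma shrinkDir_subset {i : Fin s} {δ : ℝ} (hδ : 0 ≤ δ) (K : Set (Fin s → ℝ)) :
    shrinkDir i δ K ⊆ K := fun x hx => by simpa using hx 0 (by simpa using hδ)

lemma convex_expandDir {i : Fin s} {δ : ℝ} {K : Set (Fin s → ℝ)} (hK : Convex ℝ K) :
    Convex ℝ (expandDir i δ K) := by
  rintro x ⟨c, hc, hxc⟩ y ⟨d, hd, hyd⟩ a b ha hb hab
  refine ⟨a * c + b * d, ?_, ?_⟩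
  · calc |a * c + b * d| ≤ |a * c| + |b * d| := abs_add_le _ _
      _ = a * |c| + b * |d| := by rw [abs_mul, abs_mul, abs_of_nonneg ha, abs_of_nonneg hb]
      _ ≤ a * δ + b * δ := by gcongr
      _ = δ := by rw [← add_mul, hab, one_mul]
  · have h : a • x + b • y + (a * c + b * d) • dirVec i
        = a • (x + c • dirVec i) + b • (y + d • dirVec i) := by
      simp only [smul_add, ← smul_smul, add_smul]
      abel
    rw [h]
    exact hK hxc hyd ha hb hab

lemma convex_shrinkDir {i : Fin s} {δ : ℝ} {K : Set (Fin s → ℝ)} (hK : Convex ℝ K) :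
    Convex ℝ (shrinkDir i δ K) := by
  intro x hx y hy a b ha hb hab c hc
  have h : a • x + b • y + c • dirVec i
      = a • (x + c • dirVec i) + b • (y + c • dirVec i) := by
    have h1 : c • dirVec i = (a + b) • (c • dirVec i) := by rw [hab, one_smul]
    calc a • x + b • y + c • dirVec i = a • x + b • y + (a + b) • (c • dirVec i) := by rw [← h1]
      _ = a • (x + c • dirVec i) + b • (y + c • dirVec i) := by
          simp only [smul_add, add_smul]; abel
  rw [h]
  exact hK (hx c hc) (hy c hc) ha hb hab

lemma isCompact_expandDir {i : Fin s} {δ : ℝ} {K : Set (Fin s → ℝ)} (hK : IsCompact K) :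
    IsCompact (expandDir i δ K) := by
  have h : expandDir i δ K =
      (fun p : (Fin s → ℝ) × ℝ => p.1 + p.2 • dirVec i) '' (K ×ˢ Icc (-δ) δ) := by
    ext x
    constructor
    · rintro ⟨c, hc, hxc⟩
      rw [abs_le] at hc
      refine ⟨⟨x + c • dirVec i, -c⟩, ⟨hxc, ⟨show -δ ≤ -c by linarith [hc.2],
        show -c ≤ δ by linarith [hc.1]⟩⟩, ?_⟩
      simp [add_assoc, ← add_smul]
    · rintro ⟨⟨kk, t⟩, ⟨hk, ht⟩, rfl⟩
      refine ⟨-t, by rw [abs_le]; exact ⟨by linarith [ht.2], by linarith [ht.1]⟩, ?_⟩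
      simpa [add_assoc, ← add_smul] using hk
  rw [h]
  exact (hK.prod isCompact_Icc).image (by fun_prop)

lemma isClosed_shrinkDir {i : Fin s} {δ : ℝ} {K : Set (Fin s → ℝ)} (hK : IsClosed K) :
    IsClosed (shrinkDir i δ K) := by
  have h : shrinkDir i δ K = ⋂ (c : ℝ) (_ : |c| ≤ δ), (fun x => x + c • dirVec i) ⁻¹' K := by
    ext x; simp [shrinkDir]
  rw [h]
  exact isClosed_iInter fun c => isClosed_iInter fun _ => hK.preimage (by fun_prop)

lemma expandDir_subset_pi {i : Fin s} {δ : ℝ} (hδ : 0 ≤ δ) {K : Set (Fin s → ℝ)} {A B : ℝ}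
    (hK : K ⊆ Set.univ.pi fun _ => Icc A B) :
    expandDir i δ K ⊆ Set.univ.pi fun _ => Icc (A - δ) (B + δ) := by
  rintro x ⟨c, hc, hxc⟩ j _
  have h := hK hxc (i := j) (mem_univ j)
  rw [abs_le] at hc
  by_cases hji : j = i
  · subst hji
    simp only [Pi.add_apply, Pi.smul_apply, dirVec_same, smul_eq_mul, mul_one] at h
    exact ⟨by linarith [h.1], by linarith [h.2]⟩
  · simp only [Pi.add_apply, Pi.smul_apply, dirVec_ne hji, smul_eq_mul, mul_zero,
      add_zero] at h
    exact ⟨by linarith [h.1], by linarith [h.2]⟩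

lemma insertNth_add_smul {n : ℕ} (i : Fin (n+1)) (t c : ℝ) (y : Fin n → ℝ) :
    i.insertNth t y + c • dirVec i = i.insertNth (t + c) y := by
  funext j
  refine Fin.succAboveCases i ?_ (fun j => ?_) j
  · simp [dirVec]
  · simp [dirVec, Pi.single_eq_of_ne (Fin.succAbove_ne i j)]

lemma insertNth_combo {n : ℕ} (i : Fin (n+1)) {a b : ℝ} (hab : a + b = 1) (t u : ℝ)
    (y : Fin n → ℝ) :
    a • (i.insertNth t y : Fin (n+1) → ℝ) + b • (i.insertNth u y : Fin (n+1) → ℝ)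
      = i.insertNth (a * t + b * u) y := by
  funext j
  refine Fin.succAboveCases i ?_ (fun j => ?_) j
  · simp
  · simp only [Pi.add_apply, Pi.smul_apply, Fin.insertNth_apply_succAbove, smul_eq_mul]
    rw [← add_mul, hab, one_mul]

lemma convex_slice {n : ℕ} (i : Fin (n+1)) (y : Fin n → ℝ) {K : Set (Fin (n+1) → ℝ)}
    (hK : Convex ℝ K) : Convex ℝ {t : ℝ | i.insertNth t y ∈ K} := by
  intro t ht u hu a b ha hb hab
  have h := hK ht hu ha hb hab
  rw [insertNth_combo i hab] at h
  show i.insertNth (a • t + b • u) y ∈ K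
  simpa [smul_eq_mul] using h

/-- 1-D expansion bound. -/
lemma oneD_expand {I : Set ℝ} (hI : I.OrdConnected) {A B : ℝ} (hIb : I ⊆ Icc A B)
    {δ : ℝ} (hδ : 0 ≤ δ) :
    volume ({t : ℝ | ∃ c : ℝ, |c| ≤ δ ∧ t + c ∈ I} \ I) ≤ ENNReal.ofReal (2 * δ) := by
  rcases I.eq_empty_or_nonempty with h | hne
  · simp [h]
  set a := sInf I
  set b := sSup I
  have hbd : BddBelow I := ⟨A, fun t ht => (hIb ht).1⟩
  have hbu : BddAbove I := ⟨B, fun t ht => (hIb ht).2⟩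
  have hsub : {t : ℝ | ∃ c : ℝ, |c| ≤ δ ∧ t + c ∈ I} \ I ⊆ Icc (a - δ) a ∪ Icc b (b + δ) := by
    rintro t ⟨⟨c, hc, htc⟩, htI⟩
    rw [abs_le] at hc
    have h1 : a ≤ t + c := csInf_le hbd htc
    have h2 : t + c ≤ b := le_csSup hbu htc
    have hcase : t ≤ a ∨ b ≤ t := by
      by_contra hcon
      push_neg at hcon
      obtain ⟨u, hu, hut⟩ := exists_lt_of_csInf_lt hne hcon.1
      obtain ⟨v, hv, htv⟩ := exists_lt_of_lt_csSup hne hcon.2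
      exact htI (hI.out hu hv ⟨hut.le, htv.le⟩)
    rcases hcase with h | h
    · exact Or.inl ⟨by linarith, h⟩
    · exact Or.inr ⟨h, by linarith⟩
  calc volume ({t : ℝ | ∃ c : ℝ, |c| ≤ δ ∧ t + c ∈ I} \ I)
      ≤ volume (Icc (a - δ) a ∪ Icc b (b + δ)) := measure_mono hsub
    _ ≤ volume (Icc (a - δ) a) + volume (Icc b (b + δ)) := measure_union_le _ _
    _ = ENNReal.ofReal δ + ENNReal.ofReal δ := by rw [Real.volume_Icc, Real.volume_Icc]; ring_nf
    _ = ENNReal.ofReal (2 * δ) := by rw [← ENNReal.ofReal_add hδ hδ]; ring_nf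

/-- 1-D shrinking bound. -/
lemma oneD_shrink {I : Set ℝ} (hI : I.OrdConnected) {A B : ℝ} (hIb : I ⊆ Icc A B)
    {δ : ℝ} (hδ : 0 ≤ δ) :
    volume (I \ {t : ℝ | ∀ c : ℝ, |c| ≤ δ → t + c ∈ I}) ≤ ENNReal.ofReal (2 * δ) := by
  rcases I.eq_empty_or_nonempty with h | hne
  · simp [h]
  set a := sInf I
  set b := sSup I
  have hbd : BddBelow I := ⟨A, fun t ht => (hIb ht).1⟩
  have hbu : BddAbove I := ⟨B, fun t ht => (hIb ht).2⟩
  have hsub : I \ {t : ℝ | ∀ c : ℝ, |c| ≤ δ → t + c ∈ I} ⊆ Icc a (a + δ) ∪ Icc (b - δ) b := by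
    rintro t ⟨htI, ht⟩
    simp only [mem_setOf_eq, not_forall] at ht
    obtain ⟨c, hc, htc⟩ := ht
    rw [abs_le] at hc
    have h1 : a ≤ t := csInf_le hbd htI
    have h2 : t ≤ b := le_csSup hbu htI
    have hcase : t + c ≤ a ∨ b ≤ t + c := by
      by_contra hcon
      push_neg at hcon
      obtain ⟨u, hu, hut⟩ := exists_lt_of_csInf_lt hne hcon.1
      obtain ⟨v, hv, htv⟩ := exists_lt_of_lt_csSup hne hcon.2
      exact htc (hI.out hu hv ⟨hut.le, htv.le⟩)
    rcases hcase with h | h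
    · exact Or.inl ⟨h1, by linarith⟩
    · exact Or.inr ⟨by linarith, h2⟩
  calc volume (I \ {t : ℝ | ∀ c : ℝ, |c| ≤ δ → t + c ∈ I})
      ≤ volume (Icc a (a + δ) ∪ Icc (b - δ) b) := measure_mono hsub
    _ ≤ volume (Icc a (a + δ)) + volume (Icc (b - δ) b) := measure_union_le _ _
    _ = ENNReal.ofReal δ + ENNReal.ofReal δ := by rw [Real.volume_Icc, Real.volume_Icc]; ring_nf
    _ = ENNReal.ofReal (2 * δ) := by rw [← ENNReal.ofReal_add hδ hδ]; ring_nf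

/-- Fubini-type slice bound inside the unit cube. -/
lemma slice_vol_le {n : ℕ} (i : Fin (n+1)) (E : Set (Fin (n+1) → ℝ))
    (hE : NullMeasurableSet E volume) (hEsub : E ⊆ unitCube (n+1)) (r : ℝ≥0∞)
    (h : ∀ y : Fin n → ℝ, volume {t : ℝ | i.insertNth t y ∈ E} ≤ r) :
    volume E ≤ r := by
  obtain ⟨F, hFE, hFmeas, hFeq⟩ := hE.exists_measurable_subset_ae_eq
  have hvol : volume E = volume F := (measure_congr hFeq).symm
  rw [hvol]
  have mp := measurePreserving_piFinSuccAbove (fun _ : Fin (n+1) => (volume : Measure ℝ)) i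
  have hFim : MeasurableSet (MeasurableEquiv.piFinSuccAbove (fun _ : Fin (n+1) => ℝ) i '' F) :=
    (MeasurableEquiv.piFinSuccAbove (fun _ : Fin (n+1) => ℝ) i).measurableSet_image.mpr hFmeas
  have hpre : (MeasurableEquiv.piFinSuccAbove (fun _ : Fin (n+1) => ℝ) i) ⁻¹'
      (MeasurableEquiv.piFinSuccAbove (fun _ : Fin (n+1) => ℝ) i '' F) = F :=
    Set.preimage_image_eq F (MeasurableEquiv.piFinSuccAbove (fun _ : Fin (n+1) => ℝ) i).injective
  have hmapeq : volume F = ((volume : Measure ℝ).prod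
      (Measure.pi fun _ : Fin n => (volume : Measure ℝ)))
      (MeasurableEquiv.piFinSuccAbove (fun _ : Fin (n+1) => ℝ) i '' F) := by
    have h2 := mp.measure_preimage hFim.nullMeasurableSet
    rw [hpre] at h2
    rw [MeasureTheory.volume_pi]
    exact h2
  rw [hmapeq, Measure.prod_apply_symm hFim]
  have hslice : ∀ y : Fin n → ℝ,
      (fun t : ℝ => (t, y)) ⁻¹' (MeasurableEquiv.piFinSuccAbove (fun _ : Fin (n+1) => ℝ) i '' F)
        = {t : ℝ | i.insertNth t y ∈ F} := by
    intro y
    ext t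
    rw [mem_preimage, MeasurableEquiv.image_eq_preimage_symm, mem_preimage]
    simp [MeasurableEquiv.piFinSuccAbove_symm_apply, Fin.insertNthEquiv]
  have hbase : ∀ y : Fin n → ℝ,
      volume {t : ℝ | i.insertNth t y ∈ F} ≤
        (Set.univ.pi fun _ : Fin n => Icc (0:ℝ) 1).indicator (fun _ => r) y := by
    intro y
    by_cases hy : y ∈ Set.univ.pi fun _ : Fin n => Icc (0:ℝ) 1
    · rw [indicator_of_mem hy]
      exact le_trans (measure_mono fun t ht => hFE ht) (h y)
    · rw [indicator_of_notMem hy]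
      have hemp : {t : ℝ | i.insertNth t y ∈ F} = ∅ := by
        ext t
        simp only [mem_setOf_eq, mem_empty_iff_false, iff_false]
        intro hmem
        exact hy fun j _ => by
          have := hEsub (hFE hmem) (i.succAbove j) (mem_univ _)
          rwa [Fin.insertNth_apply_succAbove] at this
      simp [hemp]
  calc ∫⁻ y, volume ((fun t : ℝ => (t, y)) ⁻¹'
        (MeasurableEquiv.piFinSuccAbove (fun _ : Fin (n+1) => ℝ) i '' F))
          ∂(Measure.pi fun _ : Fin n => (volume : Measure ℝ))
      ≤ ∫⁻ y, (Set.univ.pi fun _ : Fin n => Icc (0:ℝ) 1).indicator (fun _ => r) y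
          ∂(Measure.pi fun _ : Fin n => (volume : Measure ℝ)) := by
        refine lintegral_mono fun y => ?_
        rw [hslice y]
        exact hbase y
    _ = r * (Measure.pi fun _ : Fin n => (volume : Measure ℝ))
          (Set.univ.pi fun _ : Fin n => Icc (0:ℝ) 1) := by
        rw [lintegral_indicator_const (MeasurableSet.univ_pi fun _ => measurableSet_Icc)]
    _ ≤ r := by
        rw [Measure.pi_pi]
        simp [Real.volume_Icc]

/-- Volume of one expansion step, inside the unit cube. -/
lemma vol_expand_step {n : ℕ} (i : Fin (n+1)) {K : Set (Fin (n+1) → ℝ)} (hK : Convex ℝ K)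
    (hKc : IsCompact K) {A B : ℝ} (hKb : K ⊆ Set.univ.pi fun _ => Icc A B) {δ : ℝ}
    (hδ : 0 ≤ δ) :
    volume (unitCube (n+1) ∩ (expandDir i δ K \ K)) ≤ ENNReal.ofReal (2 * δ) := by
  have hcube : IsClosed (unitCube (n+1)) := isClosed_set_pi fun _ _ => isClosed_Icc
  have hmeas : NullMeasurableSet (unitCube (n+1) ∩ (expandDir i δ K \ K)) volume :=
    ((hcube.measurableSet.inter
      (((isCompact_expandDir hKc).isClosed.measurableSet).diff
        hKc.isClosed.measurableSet))).nullMeasurableSet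
  refine slice_vol_le i _ hmeas inter_subset_left _ fun y => ?_
  set I : Set ℝ := {t : ℝ | i.insertNth t y ∈ K} with hI
  have hIo : I.OrdConnected := (convex_slice i y hK).ordConnected
  have hIb : I ⊆ Icc A B := fun t ht => by
    have := hKb ht i (mem_univ i)
    rwa [Fin.insertNth_apply_same] at this
  refine le_trans (measure_mono ?_) (oneD_expand hIo hIb hδ)
  rintro t ⟨_, ⟨⟨c, hc, hcK⟩, htK⟩⟩
  rw [insertNth_add_smul] at hcK
  exact ⟨⟨c, hc, hcK⟩, htK⟩

/-- Volume of one shrinking step. -/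
lemma vol_shrink_step {n : ℕ} (i : Fin (n+1)) {K : Set (Fin (n+1) → ℝ)} (hK : Convex ℝ K)
    (hKb : K ⊆ unitCube (n+1)) {δ : ℝ} (hδ : 0 ≤ δ) :
    volume (K \ shrinkDir i δ K) ≤ ENNReal.ofReal (2 * δ) := by
  have hmeas : NullMeasurableSet (K \ shrinkDir i δ K) volume :=
    (hK.nullMeasurableSet _).diff ((convex_shrinkDir hK).nullMeasurableSet _)
  refine slice_vol_le i _ hmeas (fun x hx => hKb hx.1) _ fun y => ?_
  set I : Set ℝ := {t : ℝ | i.insertNth t y ∈ K} with hI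
  have hIo : I.OrdConnected := (convex_slice i y hK).ordConnected
  have hIb : I ⊆ Icc (0:ℝ) 1 := fun t ht => by
    have := hKb ht i (mem_univ i)
    rwa [Fin.insertNth_apply_same] at this
  refine le_trans (measure_mono ?_) (oneD_shrink hIo hIb hδ)
  rintro t ⟨htK, hts⟩
  refine ⟨htK, fun hall => hts fun c hc => ?_⟩
  rw [insertNth_add_smul]
  exact hall c hc

def chainE (δ : ℝ) (K : Set (Fin s → ℝ)) : ℕ → Set (Fin s → ℝ)
  | 0 => K
  | m+1 => if h : m < s then expandDir ⟨m, h⟩ δ (chainE δ K m) else chainE δ K m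

def chainS (δ : ℝ) (K : Set (Fin s → ℝ)) : ℕ → Set (Fin s → ℝ)
  | 0 => K
  | m+1 => if h : m < s then shrinkDir ⟨m, h⟩ δ (chainS δ K m) else chainS δ K m

lemma chainE_zero (δ : ℝ) (K : Set (Fin s → ℝ)) : chainE δ K 0 = K := rfl

lemma chainS_zero (δ : ℝ) (K : Set (Fin s → ℝ)) : chainS δ K 0 = K := rfl

lemma chainE_succ_of_lt {m : ℕ} (h : m < s) (δ : ℝ) (K : Set (Fin s → ℝ)) :
    chainE δ K (m+1) = expandDir ⟨m, h⟩ δ (chainE δ K m) := by simp [chainE, h]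

lemma chainE_succ_of_ge {m : ℕ} (h : ¬ m < s) (δ : ℝ) (K : Set (Fin s → ℝ)) :
    chainE δ K (m+1) = chainE δ K m := by simp [chainE, h]

lemma chainS_succ_of_lt {m : ℕ} (h : m < s) (δ : ℝ) (K : Set (Fin s → ℝ)) :
    chainS δ K (m+1) = shrinkDir ⟨m, h⟩ δ (chainS δ K m) := by simp [chainS, h]

lemma chainS_succ_of_ge {m : ℕ} (h : ¬ m < s) (δ : ℝ) (K : Set (Fin s → ℝ)) :
    chainS δ K (m+1) = chainS δ K m := by simp [chainS, h]

lemma mem_chainE {δ : ℝ} {K : Set (Fin s → ℝ)} {z : Fin s → ℝ} (hz : z ∈ K)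
    (m : ℕ) (x : Fin s → ℝ) (hclose : ∀ j : Fin s, (j : ℕ) < m → |x j - z j| ≤ δ)
    (heq : ∀ j : Fin s, m ≤ (j : ℕ) → x j = z j) : x ∈ chainE δ K m := by
  induction m generalizing x with
  | zero =>
    have hxz : x = z := funext fun j => heq j (Nat.zero_le _)
    rw [chainE_zero, hxz]; exact hz
  | succ m ih =>
    by_cases h : m < s
    · rw [chainE_succ_of_lt h]
      set i : Fin s := ⟨m, h⟩ with hi
      refine ⟨z i - x i, by rw [abs_sub_comm]; exact hclose i (by simp [hi]), ?_⟩
      apply ih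
      · intro j hj
        have hji : j ≠ i := fun hEq => by simp [hEq, hi] at hj
        simp only [Pi.add_apply, Pi.smul_apply, dirVec_ne hji, smul_eq_mul, mul_zero, add_zero]
        exact hclose j (by omega)
      · intro j hj
        by_cases hji : j = i
        · subst hji
          simp [dirVec]
        · simp only [Pi.add_apply, Pi.smul_apply, dirVec_ne hji, smul_eq_mul, mul_zero, add_zero]
          apply heq j
          have : (j : ℕ) ≠ m := fun hEq => hji (Fin.ext (by simp [hi, hEq]))
          omega
    · rw [chainE_succ_of_ge h]
      exact ih x (fun j hj => hclose j (by omega)) (fun j hj => absurd j.isLt (by omega))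

lemma mem_of_chainS {δ : ℝ} {K : Set (Fin s → ℝ)}
    (m : ℕ) (x y : Fin s → ℝ) (hx : x ∈ chainS δ K m)
    (hclose : ∀ j : Fin s, (j : ℕ) < m → |y j - x j| ≤ δ)
    (heq : ∀ j : Fin s, m ≤ (j : ℕ) → y j = x j) : y ∈ K := by
  induction m generalizing x with
  | zero =>
    have hxy : y = x := funext fun j => heq j (Nat.zero_le _)
    rw [hxy]; rw [chainS_zero] at hx; exact hx
  | succ m ih =>
    by_cases h : m < s
    · rw [chainS_succ_of_lt h] at hx
      set i : Fin s := ⟨m, h⟩ with hi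
      have hx' : x + (y i - x i) • dirVec i ∈ chainS δ K m :=
        hx (y i - x i) (hclose i (by simp [hi]))
      apply ih _ hx'
      · intro j hj
        have hji : j ≠ i := fun hEq => by simp [hEq, hi] at hj
        simp only [Pi.add_apply, Pi.smul_apply, dirVec_ne hji, smul_eq_mul, mul_zero, add_zero]
        exact hclose j (by omega)
      · intro j hj
        by_cases hji : j = i
        · subst hji
          simp [dirVec]
        · simp only [Pi.add_apply, Pi.smul_apply, dirVec_ne hji, smul_eq_mul, mul_zero, add_zero]
          apply heq j
          have : (j : ℕ) ≠ m := fun hEq => hji (Fin.ext (by simp [hi, hEq]))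
          omega
    · rw [chainS_succ_of_ge h] at hx
      exact ih x hx (fun j hj => hclose j (by omega)) (fun j hj => absurd j.isLt (by omega))

/-- generic telescoping, upward. -/
lemma tele_up {α : Type*} (f : ℕ → Set α) (m : ℕ) :
    f m \ f 0 ⊆ ⋃ j ∈ Finset.range m, (f (j+1) \ f j) := by
  induction m with
  | zero => intro x hx; exact (hx.2 hx.1).elim
  | succ m ih =>
    intro x hx
    by_cases hxm : x ∈ f m
    · obtain ⟨j, hj, hmem⟩ := by simpa only [mem_iUnion, exists_prop] using ih ⟨hxm, hx.2⟩
      exact mem_iUnion₂.mpr ⟨j, Finset.mem_range.mpr (by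
        have := Finset.mem_range.mp hj; omega), hmem⟩
    · exact mem_iUnion₂.mpr ⟨m, Finset.mem_range.mpr (by omega), ⟨hx.1, hxm⟩⟩

/-- generic telescoping, downward. -/
lemma tele_down {α : Type*} (f : ℕ → Set α) (m : ℕ) :
    f 0 \ f m ⊆ ⋃ j ∈ Finset.range m, (f j \ f (j+1)) := by
  induction m with
  | zero => intro x hx; exact (hx.2 hx.1).elim
  | succ m ih =>
    intro x hx
    by_cases hxm : x ∈ f m
    · exact mem_iUnion₂.mpr ⟨m, Finset.mem_range.mpr (by omega), ⟨hxm, hx.2⟩⟩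
    · obtain ⟨j, hj, hmem⟩ := by simpa only [mem_iUnion, exists_prop] using ih ⟨hx.1, hxm⟩
      exact mem_iUnion₂.mpr ⟨j, Finset.mem_range.mpr (by
        have := Finset.mem_range.mp hj; omega), hmem⟩

lemma chainE_convex {δ : ℝ} {K : Set (Fin s → ℝ)} (hK : Convex ℝ K) (m : ℕ) :
    Convex ℝ (chainE δ K m) := by
  induction m with
  | zero => exact hK
  | succ m ih =>
    by_cases h : m < s
    · rw [chainE_succ_of_lt h]; exact convex_expandDir ih
    · rw [chainE_succ_of_ge h]; exact ih

lemma chainE_isCompact {δ : ℝ} {K : Set (Fin s → ℝ)} (hK : IsCompact K) (m : ℕ) :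
    IsCompact (chainE δ K m) := by
  induction m with
  | zero => exact hK
  | succ m ih =>
    by_cases h : m < s
    · rw [chainE_succ_of_lt h]; exact isCompact_expandDir ih
    · rw [chainE_succ_of_ge h]; exact ih

lemma chainE_bounded {δ : ℝ} (hδ : 0 ≤ δ) {K : Set (Fin s → ℝ)}
    (hK : K ⊆ unitCube s) (m : ℕ) :
    ∃ A B : ℝ, chainE δ K m ⊆ Set.univ.pi fun _ => Icc A B := by
  induction m with
  | zero => exact ⟨0, 1, hK⟩
  | succ m ih =>
    obtain ⟨A, B, hAB⟩ := ih
    by_cases h : m < s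
    · rw [chainE_succ_of_lt h]
      exact ⟨A - δ, B + δ, expandDir_subset_pi hδ hAB⟩
    · rw [chainE_succ_of_ge h]
      exact ⟨A, B, hAB⟩

lemma chainS_convex {δ : ℝ} {K : Set (Fin s → ℝ)} (hK : Convex ℝ K) (m : ℕ) :
    Convex ℝ (chainS δ K m) := by
  induction m with
  | zero => exact hK
  | succ m ih =>
    by_cases h : m < s
    · rw [chainS_succ_of_lt h]; exact convex_shrinkDir ih
    · rw [chainS_succ_of_ge h]; exact ih

lemma chainS_subset {δ : ℝ} (hδ : 0 ≤ δ) {K : Set (Fin s → ℝ)} (m : ℕ) :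
    chainS δ K m ⊆ K := by
  induction m with
  | zero => exact subset_rfl
  | succ m ih =>
    by_cases h : m < s
    · rw [chainS_succ_of_lt h]; exact (shrinkDir_subset hδ _).trans ih
    · rw [chainS_succ_of_ge h]; exact ih

/-- outer chain total volume bound -/
lemma vol_chainE {n : ℕ} {δ : ℝ} (hδ : 0 ≤ δ) {K : Set (Fin (n+1) → ℝ)} (hK : Convex ℝ K)
    (hKc : IsCompact K) (hKb : K ⊆ unitCube (n+1)) :
    volume (unitCube (n+1) ∩ (chainE δ K (n+1) \ K)) ≤ (n+1) * ENNReal.ofReal (2 * δ) := by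
  have hsub : unitCube (n+1) ∩ (chainE δ K (n+1) \ K) ⊆
      ⋃ m ∈ Finset.range (n+1), (unitCube (n+1) ∩ (chainE δ K (m+1) \ chainE δ K m)) := by
    intro x hx
    obtain ⟨m, hm, hmem⟩ := mem_iUnion₂.mp (tele_up (chainE δ K) (n+1) hx.2)
    exact mem_iUnion₂.mpr ⟨m, hm, ⟨hx.1, hmem⟩⟩
  calc volume (unitCube (n+1) ∩ (chainE δ K (n+1) \ K))
      ≤ ∑ m ∈ Finset.range (n+1),
          volume (unitCube (n+1) ∩ (chainE δ K (m+1) \ chainE δ K m)) :=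
        le_trans (measure_mono hsub) (measure_biUnion_finset_le _ _)
    _ ≤ ∑ _m ∈ Finset.range (n+1), ENNReal.ofReal (2 * δ) := by
        refine Finset.sum_le_sum fun m hm => ?_
        have hms : m < n + 1 := Finset.mem_range.mp hm
        rw [chainE_succ_of_lt hms]
        obtain ⟨A, B, hAB⟩ := chainE_bounded hδ hKb m
        exact vol_expand_step _ (chainE_convex hK m) (chainE_isCompact hKc m) hAB hδ
    _ = (n+1) * ENNReal.ofReal (2 * δ) := by
        rw [Finset.sum_const, Finset.card_range, nsmul_eq_mul]
        norm_cast

/-- inner chain total volume bound -/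
lemma vol_chainS {n : ℕ} {δ : ℝ} (hδ : 0 ≤ δ) {K : Set (Fin (n+1) → ℝ)} (hK : Convex ℝ K)
    (hKb : K ⊆ unitCube (n+1)) :
    volume (K \ chainS δ K (n+1)) ≤ (n+1) * ENNReal.ofReal (2 * δ) := by
  have hsub : K \ chainS δ K (n+1) ⊆
      ⋃ m ∈ Finset.range (n+1), (chainS δ K m \ chainS δ K (m+1)) :=
    tele_down (chainS δ K) (n+1)
  calc volume (K \ chainS δ K (n+1))
      ≤ ∑ m ∈ Finset.range (n+1), volume (chainS δ K m \ chainS δ K (m+1)) :=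
        le_trans (measure_mono hsub) (measure_biUnion_finset_le _ _)
    _ ≤ ∑ _m ∈ Finset.range (n+1), ENNReal.ofReal (2 * δ) := by
        refine Finset.sum_le_sum fun m hm => ?_
        have hms : m < n + 1 := Finset.mem_range.mp hm
        rw [chainS_succ_of_lt hms]
        exact vol_shrink_step _ (chainS_convex hK m)
          ((chainS_subset hδ m).trans hKb) hδ
    _ = (n+1) * ENNReal.ofReal (2 * δ) := by
        rw [Finset.sum_const, Finset.card_range, nsmul_eq_mul]
        norm_cast

end CubeApprox

open CubeApprox

lemma bCube_subset_unitCube {b k s : ℕ} (hb0 : (0:ℝ) < (b:ℝ)) {c : Fin s → ℕ}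
    (hc : ∀ j, c j < b ^ k) : bCube b k c ⊆ unitCube s := by
  intro x hx j _
  have h := hx j (mem_univ j)
  have hbk : (0:ℝ) < (b:ℝ)^k := pow_pos hb0 k
  constructor
  · exact le_trans (by positivity) h.1
  · have hle : ((c j : ℝ) + 1) / (b:ℝ)^k ≤ 1 := by
      rw [div_le_one hbk]
      calc ((c j : ℝ) + 1) = ((c j + 1 : ℕ) : ℝ) := by push_cast; ring
        _ ≤ ((b ^ k : ℕ) : ℝ) := by exact_mod_cast Nat.succ_le_of_lt (hc j)
        _ = (b:ℝ)^k := by push_cast; ring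
    exact le_of_lt (lt_of_lt_of_le h.2 hle)

lemma dist_le_of_mem_bCube {b k s : ℕ} (hbk : (0:ℝ) < (b:ℝ)^k) {c : Fin s → ℕ}
    {x z : Fin s → ℝ} (hx : x ∈ bCube b k c) (hz : z ∈ bCube b k c) (j : Fin s) :
    |x j - z j| ≤ ((b:ℝ)^k)⁻¹ := by
  have h1 := hx j (mem_univ j)
  have h2 := hz j (mem_univ j)
  have key : ((c j:ℝ)+1)/(b:ℝ)^k - (c j:ℝ)/(b:ℝ)^k = ((b:ℝ)^k)⁻¹ := by
    field_simp
    ring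
  rw [abs_le]
  constructor
  · linarith [h1.1, h2.2]
  · linarith [h1.2, h2.1]

lemma exists_bCube {b k s : ℕ} (hb0 : (0:ℝ) < (b:ℝ)) {x : Fin s → ℝ}
    (h0 : ∀ j, 0 ≤ x j) (h1 : ∀ j, x j < 1) :
    ∃ c : Fin s → ℕ, (∀ j, c j < b ^ k) ∧ x ∈ bCube b k c := by
  have hbk : (0:ℝ) < (b:ℝ)^k := pow_pos hb0 k
  refine ⟨fun j => ⌊x j * (b:ℝ)^k⌋₊, fun j => ?_, fun j _ => ⟨?_, ?_⟩⟩
  · have hlt : x j * (b:ℝ)^k < ((b^k : ℕ):ℝ) := by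
      push_cast
      nlinarith [h1 j, hbk]
    exact (Nat.floor_lt (mul_nonneg (h0 j) hbk.le)).mpr hlt
  · rw [div_le_iff₀ hbk]
    exact Nat.floor_le (mul_nonneg (h0 j) hbk.le)
  · rw [lt_div_iff₀ hbk]
    exact Nat.lt_floor_add_one _

lemma face_null {s : ℕ} (j : Fin s) :
    volume {x : Fin s → ℝ | x ∈ unitCube s ∧ x j = 1} = 0 := by
  have hsub : {x : Fin s → ℝ | x ∈ unitCube s ∧ x j = 1} ⊆
      Set.univ.pi fun i => if i = j then ({1} : Set ℝ) else Icc 0 1 := by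
    intro x hx i _
    by_cases hij : i = j
    · subst hij; simp [hx.2]
    · simp only [if_neg hij]
      exact hx.1 i (mem_univ i)
  refine measure_mono_null hsub ?_
  rw [MeasureTheory.volume_pi_pi]
  exact Finset.prod_eq_zero (Finset.mem_univ j) (by simp)

theorem convex_cube_approximation (b s k : ℕ) (hb : 2 ≤ b) (hs : 1 ≤ s)
    (J : Set (Fin s → ℝ)) (hJconv : Convex ℝ J) (hJsub : J ⊆ unitCube s) :
    volume ((⋃ c ∈ {c : Fin s → ℕ | (∀ j, c j < b ^ k) ∧
          (bCube b k c ∩ closure J).Nonempty}, bCube b k c) \ J)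
        ≤ ENNReal.ofReal (2 * s * Real.sqrt s / (b : ℝ) ^ k) ∧
    volume (J \ ⋃ c ∈ {c : Fin s → ℕ | (∀ j, c j < b ^ k) ∧ bCube b k c ⊆ J}, bCube b k c)
        ≤ ENNReal.ofReal (2 * s * Real.sqrt s / (b : ℝ) ^ k) := by
  obtain ⟨n, rfl⟩ : ∃ n, s = n + 1 := ⟨s - 1, (Nat.succ_pred_eq_of_pos hs).symm⟩
  have hb0 : (0:ℝ) < (b:ℝ) := by
    have : 0 < b := by omega
    exact_mod_cast this
  have hbk : (0:ℝ) < (b:ℝ)^k := pow_pos hb0 k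
  set δ : ℝ := ((b:ℝ)^k)⁻¹ with hδdef
  have hδ : 0 ≤ δ := by positivity
  -- numerical bound
  have hnum : ((n:ℝ≥0∞)+1) * ENNReal.ofReal (2 * δ)
      ≤ ENNReal.ofReal (2 * (n+1 : ℕ) * Real.sqrt (n+1 : ℕ) / (b : ℝ) ^ k) := by
    have hcast : ((n:ℝ≥0∞)+1) = ENNReal.ofReal ((n:ℝ)+1) := by
      rw [ENNReal.ofReal_add (by positivity) (by norm_num)]
      simp [ENNReal.ofReal_natCast]
    rw [hcast, ← ENNReal.ofReal_mul (by positivity)]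
    apply ENNReal.ofReal_le_ofReal
    have hnn0 : (0:ℝ) ≤ (n:ℝ) := Nat.cast_nonneg n
    have hsq : (1:ℝ) ≤ Real.sqrt ((n:ℝ)+1) := Real.one_le_sqrt.mpr (by linarith)
    have hnn : (0:ℝ) ≤ (n:ℝ)+1 := by linarith
    have h2 : ((n:ℝ)+1) * (2 * δ) ≤ 2 * ((n:ℝ)+1) * Real.sqrt ((n:ℝ)+1) * δ := by
      have hmul : (2*((n:ℝ)+1)*δ) * 1 ≤ (2*((n:ℝ)+1)*δ) * Real.sqrt ((n:ℝ)+1) :=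
        mul_le_mul_of_nonneg_left hsq (by positivity)
      calc ((n:ℝ)+1) * (2 * δ) = (2*((n:ℝ)+1)*δ) * 1 := by ring
        _ ≤ (2*((n:ℝ)+1)*δ) * Real.sqrt ((n:ℝ)+1) := hmul
        _ = 2 * ((n:ℝ)+1) * Real.sqrt ((n:ℝ)+1) * δ := by ring
    calc ((n:ℝ)+1) * (2 * δ) ≤ 2 * ((n:ℝ)+1) * Real.sqrt ((n:ℝ)+1) * δ := h2
      _ = 2 * ((n+1:ℕ):ℝ) * Real.sqrt ((n+1:ℕ):ℝ) / (b:ℝ)^k := by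
          rw [hδdef, div_eq_mul_inv]
          push_cast
          ring
  -- closure of J
  have hucl : IsClosed (unitCube (n+1)) := isClosed_set_pi fun _ _ => isClosed_Icc
  have hucpt : IsCompact (unitCube (n+1)) := isCompact_univ_pi fun _ => isCompact_Icc
  have hTsub : closure J ⊆ unitCube (n+1) := closure_minimal hJsub hucl
  have hTconv : Convex ℝ (closure J) := hJconv.closure
  have hTcpt : IsCompact (closure J) := hucpt.of_isClosed_subset isClosed_closure hTsub
  have hfront : volume (closure J \ J) = 0 := by
    refine measure_mono_null (fun x hx => ?_) (hJconv.addHaar_frontier volume)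
    exact ⟨hx.1, fun hint => hx.2 (interior_subset hint)⟩
  constructor
  · -- outer bound
    have hX : (⋃ c ∈ {c : Fin (n+1) → ℕ | (∀ j, c j < b ^ k) ∧
          (bCube b k c ∩ closure J).Nonempty}, bCube b k c) \ J ⊆
        (unitCube (n+1) ∩ (chainE δ (closure J) (n+1) \ closure J)) ∪ (closure J \ J) := by
      rintro x ⟨hx1, hx2⟩
      obtain ⟨c, ⟨hcb, z, hzc, hzT⟩, hxc⟩ := mem_iUnion₂.mp hx1
      by_cases hxT : x ∈ closure J
      · exact Or.inr ⟨hxT, hx2⟩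
      · refine Or.inl ⟨bCube_subset_unitCube hb0 hcb hxc, ?_, hxT⟩
        exact mem_chainE hzT (n+1) x
          (fun j _ => dist_le_of_mem_bCube hbk hxc hzc j)
          (fun j hj => absurd j.isLt (by omega))
    calc volume ((⋃ c ∈ {c : Fin (n+1) → ℕ | (∀ j, c j < b ^ k) ∧
            (bCube b k c ∩ closure J).Nonempty}, bCube b k c) \ J)
        ≤ volume ((unitCube (n+1) ∩ (chainE δ (closure J) (n+1) \ closure J))
            ∪ (closure J \ J)) := measure_mono hX
      _ ≤ volume (unitCube (n+1) ∩ (chainE δ (closure J) (n+1) \ closure J))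
            + volume (closure J \ J) := measure_union_le _ _
      _ ≤ ((n:ℝ≥0∞)+1) * ENNReal.ofReal (2 * δ) + 0 := by
          refine add_le_add ?_ (le_of_eq hfront)
          exact vol_chainE hδ hTconv hTcpt hTsub
      _ ≤ ENNReal.ofReal (2 * (n+1 : ℕ) * Real.sqrt (n+1 : ℕ) / (b : ℝ) ^ k) := by
          rw [add_zero]; exact hnum
      _ = ENNReal.ofReal (2 * ((n+1 : ℕ):ℝ) * Real.sqrt ((n+1 : ℕ):ℝ) / (b : ℝ) ^ k) := rfl
  · -- inner bound
    have hY : J \ (⋃ c ∈ {c : Fin (n+1) → ℕ | (∀ j, c j < b ^ k) ∧ bCube b k c ⊆ J},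
          bCube b k c) ⊆
        (J \ chainS δ J (n+1)) ∪ ⋃ j : Fin (n+1), {x | x ∈ unitCube (n+1) ∧ x j = 1} := by
      rintro x ⟨hxJ, hx2⟩
      by_cases hone : ∃ j, x j = 1
      · obtain ⟨j, hj⟩ := hone
        exact Or.inr (mem_iUnion.mpr ⟨j, hJsub hxJ, hj⟩)
      · push_neg at hone
        have h0 : ∀ j, 0 ≤ x j := fun j => (hJsub hxJ j (mem_univ j)).1
        have h1 : ∀ j, x j < 1 := fun j =>
          lt_of_le_of_ne (hJsub hxJ j (mem_univ j)).2 (hone j)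
        refine Or.inl ⟨hxJ, fun hxch => ?_⟩
        obtain ⟨c, hcb, hxc⟩ := exists_bCube (k := k) hb0 h0 h1
        refine hx2 (mem_iUnion₂.mpr ⟨c, ⟨hcb, fun y hyc => ?_⟩, hxc⟩)
        exact mem_of_chainS (n+1) x y hxch
          (fun j _ => dist_le_of_mem_bCube hbk hyc hxc j)
          (fun j hj => absurd j.isLt (by omega))
    calc volume (J \ ⋃ c ∈ {c : Fin (n+1) → ℕ | (∀ j, c j < b ^ k) ∧ bCube b k c ⊆ J},
            bCube b k c)
        ≤ volume ((J \ chainS δ J (n+1))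
            ∪ ⋃ j : Fin (n+1), {x | x ∈ unitCube (n+1) ∧ x j = 1}) := measure_mono hY
      _ ≤ volume (J \ chainS δ J (n+1))
            + volume (⋃ j : Fin (n+1), {x | x ∈ unitCube (n+1) ∧ x j = 1}) :=
          measure_union_le _ _
      _ ≤ ((n:ℝ≥0∞)+1) * ENNReal.ofReal (2 * δ) + 0 := by
          refine add_le_add ?_ (le_of_eq (measure_iUnion_null fun j => face_null j))
          exact vol_chainS hδ hJconv hJsub
      _ ≤ ENNReal.ofReal (2 * (n+1 : ℕ) * Real.sqrt (n+1 : ℕ) / (b : ℝ) ^ k) := by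
          rw [add_zero]; exact hnum
      _ = ENNReal.ofReal (2 * ((n+1 : ℕ):ℝ) * Real.sqrt ((n+1 : ℕ):ℝ) / (b : ℝ) ^ k) := rfl
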